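/- Let ξ₁,...,ξₙ be independent centered random variables with ξᵢ ≤ 1 a.s., σ² = ∑ᵢE[ξᵢ²] > 0, and S_n = ∑ξᵢ. Then for all x ≥ 0, inf_{λ≥0} E[e^{λ(S_n − xσ)}] ≤ H_n(x,σ), where H_n(x,σ) = { (σ/(x+σ))^{xσ+σ²} · (n/(n−xσ))^{n−xσ} }^{n/(n+σ²)} for 0 ≤ x ≤ n/σ (with the convention (n/(n−xσ))^{n−xσ} = 1 when xσ = n), and H_n(x,σ) = 0 for x > n/σ; in particular P(S_n ≥ xσ) ≤ H_n(x,σ). -/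

import Mathlib

open MeasureTheory ProbabilityTheory Real
open Filter Topology

private lemma hoeffdingL0 (x : ℝ) :
    exp x - 1 - x = x^2 * ∫ s in (0:ℝ)..1, (1-s) * exp (s*x) := by
  rcases eq_or_ne x 0 with rfl | hx
  · simp
  · have h : ∀ s ∈ Set.uIcc (0:ℝ) 1, HasDerivAt
        (fun s : ℝ => (1-s) * exp (s*x) / x + exp (s*x) / x^2)
        ((1-s) * exp (s*x)) s := by
      intro s _
      have h1 : HasDerivAt (fun s : ℝ => s * x) x s := by
        simpa using (hasDerivAt_id s).mul_const x
      have h2 : HasDerivAt (fun s : ℝ => exp (s*x)) (exp (s*x) * x) s := h1.exp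
      have h3 : HasDerivAt (fun s : ℝ => (1-s)) (-1) s := by
        simpa using (hasDerivAt_id' s).const_sub (1:ℝ)
      have := ((h3.mul h2).div_const x).add (h2.div_const (x^2))
      refine this.congr_deriv ?_
      field_simp
      ring
    have hi : IntervalIntegrable (fun s : ℝ => (1-s) * exp (s*x)) volume 0 1 := by
      apply Continuous.intervalIntegrable
      continuity
    rw [intervalIntegral.integral_eq_sub_of_hasDerivAt h hi]
    simp only [zero_mul, exp_zero]
    field_simp
    ring

private lemma hoeffdingL1 {l u b : ℝ} (hl : 0 ≤ l) (hub : u ≤ b) :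
    b^2 * (exp (l*u) - 1 - l*u) ≤ u^2 * (exp (l*b) - 1 - l*b) := by
  have e1 := hoeffdingL0 (l*u)
  have e2 := hoeffdingL0 (l*b)
  rw [e1, e2]
  have hmono : (∫ s in (0:ℝ)..1, (1-s) * exp (s*(l*u)))
      ≤ ∫ s in (0:ℝ)..1, (1-s) * exp (s*(l*b)) := by
    apply intervalIntegral.integral_mono_on zero_le_one
    · apply Continuous.intervalIntegrable; continuity
    · apply Continuous.intervalIntegrable; continuity
    · intro s hs
      have hs0 : 0 ≤ s := hs.1
      have : s*(l*u) ≤ s*(l*b) := by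
        apply mul_le_mul_of_nonneg_left _ hs0
        exact mul_le_mul_of_nonneg_left hub hl
      have := exp_le_exp.mpr this
      nlinarith [hs.2, exp_pos (s*(l*u))]
  calc b^2 * ((l*u)^2 * ∫ s in (0:ℝ)..1, (1-s) * exp (s*(l*u)))
      = l^2*u^2*b^2 * ∫ s in (0:ℝ)..1, (1-s) * exp (s*(l*u)) := by ring
    _ ≤ l^2*u^2*b^2 * ∫ s in (0:ℝ)..1, (1-s) * exp (s*(l*b)) := by
        exact mul_le_mul_of_nonneg_left hmono (by positivity)
    _ = u^2 * ((l*b)^2 * ∫ s in (0:ℝ)..1, (1-s) * exp (s*(l*b))) := by ring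

private lemma hoeffding_mgf_one_le {Ω : Type*} [MeasurableSpace Ω] (μ : Measure Ω) [IsProbabilityMeasure μ]
    (ξ : Ω → ℝ) (hmeas : Measurable ξ) (hint : Integrable ξ μ)
    (hmean : ∫ ω, ξ ω ∂μ = 0) (hbdd : ∀ᵐ ω ∂μ, ξ ω ≤ 1)
    (hint2 : Integrable (fun ω => (ξ ω)^2) μ) {c l : ℝ} (hc : 0 < c) (hl : 0 ≤ l) :
    mgf ξ μ l ≤ (exp (-(l*c)) + exp (-(l*c))*l*c
        + (exp (-(l*c)) * (exp (l*(1+c)) - 1 - l*(1+c)) / (1+c)^2) * c^2)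
      + (exp (-(l*c)) * (exp (l*(1+c)) - 1 - l*(1+c)) / (1+c)^2) * ∫ ω, (ξ ω)^2 ∂μ := by
  set γ : ℝ := exp (-(l*c)) * (exp (l*(1+c)) - 1 - l*(1+c)) / (1+c)^2 with hγdef
  have hb : (0:ℝ) < 1 + c := by linarith
  have hγ : 0 ≤ γ := by
    have := add_one_le_exp (l*(1+c))
    apply div_nonneg (mul_nonneg (exp_pos _).le (by linarith)) (by positivity)
  -- pointwise bound
  have hpt : ∀ᵐ ω ∂μ, exp (l * ξ ω) ≤
      (exp (-(l*c)) + exp (-(l*c))*l*c + γ*c^2)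
        + (exp (-(l*c))*l + 2*γ*c) * ξ ω + γ * (ξ ω)^2 := by
    filter_upwards [hbdd] with ω ht
    set t := ξ ω
    have h1 : (1+c)^2 * (exp (l*(t+c)) - 1 - l*(t+c)) ≤
        (t+c)^2 * (exp (l*(1+c)) - 1 - l*(1+c)) := hoeffdingL1 hl (by linarith)
    have h2 : exp (l*(t+c)) - 1 - l*(t+c) ≤ (t+c)^2 * (exp (l*(1+c)) - 1 - l*(1+c)) / (1+c)^2 := by
      rw [le_div_iff₀ (by positivity : (0:ℝ) < (1+c)^2)]
      nlinarith [h1]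
    have h2' : exp (l*(t+c)) ≤ 1 + l*(t+c) + (t+c)^2 * (exp (l*(1+c)) - 1 - l*(1+c)) / (1+c)^2 := by
      linarith
    have h3 : exp (l*t) = exp (-(l*c)) * exp (l*(t+c)) := by
      rw [← exp_add]; ring_nf
    calc exp (l*t) = exp (-(l*c)) * exp (l*(t+c)) := h3
      _ ≤ exp (-(l*c)) * (1 + l*(t+c) + (t+c)^2 * (exp (l*(1+c)) - 1 - l*(1+c)) / (1+c)^2) := by
          exact mul_le_mul_of_nonneg_left h2' (exp_pos _).le
      _ = (exp (-(l*c)) + exp (-(l*c))*l*c + γ*c^2) + (exp (-(l*c))*l + 2*γ*c) * t + γ * t^2 := by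
          rw [hγdef]; ring
  -- integrability of both sides
  have hintexp : Integrable (fun ω => exp (l * ξ ω)) μ := by
    refine Integrable.mono' (integrable_const (exp l)) ((hmeas.const_mul l).exp.aestronglyMeasurable) ?_
    filter_upwards [hbdd] with ω ht
    rw [Real.norm_eq_abs, abs_of_pos (exp_pos _), exp_le_exp]
    exact mul_le_of_le_one_right hl ht |>.trans (by linarith)
  have hintrhs : Integrable (fun ω => (exp (-(l*c)) + exp (-(l*c))*l*c + γ*c^2)
        + (exp (-(l*c))*l + 2*γ*c) * ξ ω + γ * (ξ ω)^2) μ :=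
    ((integrable_const _).add (hint.const_mul _)).add (hint2.const_mul _)
  have := integral_mono_ae hintexp hintrhs hpt
  rw [mgf]
  refine this.trans_eq ?_
  have eA : ∫ ω, ((exp (-(l*c)) + exp (-(l*c))*l*c + γ*c^2)
        + (exp (-(l*c))*l + 2*γ*c) * ξ ω + γ * (ξ ω)^2) ∂μ
      = (∫ ω, ((exp (-(l*c)) + exp (-(l*c))*l*c + γ*c^2)
        + (exp (-(l*c))*l + 2*γ*c) * ξ ω) ∂μ) + ∫ ω, γ * (ξ ω)^2 ∂μ :=
    integral_add ((integrable_const _).add (hint.const_mul _)) (hint2.const_mul _)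
  have eB : ∫ ω, ((exp (-(l*c)) + exp (-(l*c))*l*c + γ*c^2)
        + (exp (-(l*c))*l + 2*γ*c) * ξ ω) ∂μ
      = (∫ _ω, (exp (-(l*c)) + exp (-(l*c))*l*c + γ*c^2) ∂μ)
        + ∫ ω, (exp (-(l*c))*l + 2*γ*c) * ξ ω ∂μ :=
    integral_add (integrable_const _) (hint.const_mul _)
  rw [eA, eB, integral_const_mul, integral_const_mul, hmean, integral_const]
  simp

/-- Hoeffding's function `H_n(x, σ)`, with the convention
`(n/(n - xσ))^{n - xσ} = 1` when `xσ = n` (automatic via `rpow`), and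
`H_n(x, σ) = 0` for `x > n/σ`. -/
noncomputable def hoeffdingFn (n : ℕ) (x σ : ℝ) : ℝ :=
  if x ≤ n / σ then
    ((σ / (x + σ)) ^ (x * σ + σ ^ 2) *
      ((n : ℝ) / ((n : ℝ) - x * σ)) ^ ((n : ℝ) - x * σ)) ^ ((n : ℝ) / ((n : ℝ) + σ ^ 2))
  else 0

/-- Hoeffding's inequality: the Chernoff bound, hence the tail probability, is
bounded by Hoeffding's function. -/
theorem hoeffding_inequality {Ω : Type*} [MeasurableSpace Ω] (μ : Measure Ω)
    [IsProbabilityMeasure μ] (n : ℕ) (ξ : Fin n → Ω → ℝ) (σ : ℝ) (hσ : 0 < σ)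
    (hmeas : ∀ i, Measurable (ξ i))
    (hindep : iIndepFun ξ μ)
    (hint : ∀ i, Integrable (ξ i) μ) (hmean : ∀ i, ∫ ω, ξ i ω ∂μ = 0)
    (hbdd : ∀ i, ∀ᵐ ω ∂μ, ξ i ω ≤ 1)
    (hint2 : ∀ i, Integrable (fun ω => (ξ i ω) ^ 2) μ)
    (hσ2 : σ ^ 2 = ∑ i, ∫ ω, (ξ i ω) ^ 2 ∂μ) :
    ∀ x : ℝ, 0 ≤ x →
      sInf {y : ℝ | ∃ l : ℝ, 0 ≤ l ∧
          y = ∫ ω, Real.exp (l * ((∑ i, ξ i ω) - x * σ)) ∂μ}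
        ≤ hoeffdingFn n x σ ∧
      (μ {ω | x * σ ≤ ∑ i, ξ i ω}).toReal ≤ hoeffdingFn n x σ := by
  intro x hx
  have hn0 : (0:ℝ) < n := by
    rcases Nat.eq_zero_or_pos n with h | h
    · exfalso; subst h; simp at hσ2; nlinarith
    · exact_mod_cast h
  have hn0' : n ≠ 0 := Nat.cast_ne_zero.mp hn0.ne'
  set c : ℝ := σ^2 / n with hc_def
  have hc : 0 < c := by positivity
  set s : ℝ := x * σ with hs_def
  have hs0 : 0 ≤ s := mul_nonneg hx hσ.le
  set M : ℝ → ℝ := fun l => (c * exp l + exp (-(l*c))) / (1+c) with hM_def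
  set Y : Set ℝ := {y : ℝ | ∃ l : ℝ, 0 ≤ l ∧
      y = ∫ ω, Real.exp (l * ((∑ i, ξ i ω) - s)) ∂μ} with hY_def
  have hmemY : ∀ l : ℝ, 0 ≤ l →
      (∫ ω, Real.exp (l * ((∑ i, ξ i ω) - s)) ∂μ) ∈ Y := fun l hl => ⟨l, hl, rfl⟩
  have hYne : Y.Nonempty := ⟨_, hmemY 0 le_rfl⟩
  have hYbdd : BddBelow Y := by
    refine ⟨0, ?_⟩
    rintro y ⟨l, hl, rfl⟩
    exact integral_nonneg fun ω => (exp_pos _).le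
  -- integrability of exp of the sum
  have hsum_le : ∀ᵐ ω ∂μ, (∑ i, ξ i ω) ≤ (n:ℝ) := by
    have := ae_all_iff.2 hbdd
    filter_upwards [this] with ω hω
    calc ∑ i, ξ i ω ≤ ∑ _i : Fin n, (1:ℝ) := Finset.sum_le_sum fun i _ => hω i
      _ = n := by simp
  have hintS : ∀ l : ℝ, 0 ≤ l →
      Integrable (fun ω => Real.exp (l * ((∑ i, ξ i ω)))) μ := by
    intro l hl
    refine Integrable.mono' (integrable_const (exp (l*n)))
      ((Finset.measurable_sum Finset.univ fun i _ => hmeas i).const_mul l).exp.aestronglyMeasurable ?_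
    filter_upwards [hsum_le] with ω hω
    rw [Real.norm_eq_abs, abs_of_pos (exp_pos _), exp_le_exp]
    exact mul_le_mul_of_nonneg_left hω hl
  -- value of the elements
  have hval : ∀ l : ℝ, 0 ≤ l →
      (∫ ω, Real.exp (l * ((∑ i, ξ i ω) - s)) ∂μ)
        = exp (-(l*s)) * mgf (∑ i, ξ i) μ l := by
    intro l hl
    have : ∀ ω, Real.exp (l * ((∑ i, ξ i ω) - s))
        = exp (-(l*s)) * Real.exp (l * ((∑ i, ξ i) ω)) := by
      intro ω
      rw [← exp_add, Finset.sum_apply]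
      ring_nf
    simp_rw [this]
    rw [integral_const_mul, mgf]
  -- the key Chernoff-type bound
  have hF : ∀ l : ℝ, 0 ≤ l →
      (∫ ω, Real.exp (l * ((∑ i, ξ i ω) - s)) ∂μ) ≤ exp (-(l*s)) * (M l)^n := by
    intro l hl
    rw [hval l hl]
    refine mul_le_mul_of_nonneg_left ?_ (exp_pos _).le
    set γ : ℝ := exp (-(l*c)) * (exp (l*(1+c)) - 1 - l*(1+c)) / (1+c)^2 with hγdef
    set C0 : ℝ := exp (-(l*c)) + exp (-(l*c))*l*c + γ*c^2 with hC0def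
    have hγ : 0 ≤ γ := by
      have := add_one_le_exp (l*(1+c))
      exact div_nonneg (mul_nonneg (exp_pos _).le (by linarith)) (by positivity)
    have hC0 : 0 ≤ C0 := by
      have h1 : 0 ≤ exp (-(l*c))*l*c := mul_nonneg (mul_nonneg (exp_pos _).le hl) hc.le
      have h2 : 0 ≤ γ*c^2 := mul_nonneg hγ (sq_nonneg _)
      have := (exp_pos (-(l*c))).le
      rw [hC0def]; linarith
    have hAi : ∀ i : Fin n, mgf (ξ i) μ l ≤ C0 + γ * ∫ ω, (ξ i ω)^2 ∂μ := by
      intro i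
      have h := hoeffding_mgf_one_le μ (ξ i) (hmeas i) (hint i) (hmean i) (hbdd i) (hint2 i) hc hl
      rw [← hγdef, ← hC0def] at h
      exact h
    have hvnn : ∀ i : Fin n, 0 ≤ ∫ ω, (ξ i ω)^2 ∂μ := fun i => integral_nonneg fun ω => sq_nonneg _
    have hAnn : ∀ i : Fin n, 0 ≤ C0 + γ * ∫ ω, (ξ i ω)^2 ∂μ :=
      fun i => add_nonneg hC0 (mul_nonneg hγ (hvnn i))
    have hprod : mgf (∑ i, ξ i) μ l = ∏ i, mgf (ξ i) μ l := hindep.mgf_sum hmeas Finset.univ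
    have h1 : ∏ i, mgf (ξ i) μ l ≤ ∏ i, (C0 + γ * ∫ ω, (ξ i ω)^2 ∂μ) :=
      Finset.prod_le_prod (fun i _ => mgf_nonneg) (fun i _ => hAi i)
    have hmean' : ∑ i : Fin n, ((n:ℝ)⁻¹ * (C0 + γ * ∫ ω, (ξ i ω)^2 ∂μ)) = C0 + γ * c := by
      rw [← Finset.mul_sum, Finset.sum_add_distrib, Finset.sum_const, ← Finset.mul_sum, ← hσ2]
      simp only [Finset.card_univ, Fintype.card_fin, nsmul_eq_mul]
      rw [hc_def]
      field_simp
    have hgm := Real.geom_mean_le_arith_mean_weighted Finset.univ (fun _ => (n:ℝ)⁻¹)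
      (fun i => C0 + γ * ∫ ω, (ξ i ω)^2 ∂μ) (fun i _ => by positivity)
      (by simp [Finset.card_univ, Fintype.card_fin]; field_simp) (fun i _ => hAnn i)
    have key : ∏ i, (C0 + γ * ∫ ω, (ξ i ω)^2 ∂μ) ≤ (C0 + γ*c)^n := by
      have h2 : (∏ i, (C0 + γ * ∫ ω, (ξ i ω)^2 ∂μ)^((n:ℝ)⁻¹))^n ≤ (C0+γ*c)^n :=
        pow_le_pow_left₀ (Finset.prod_nonneg fun i _ => rpow_nonneg (hAnn i) _)
          (hgm.trans_eq hmean') n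
      refine le_trans (le_of_eq ?_) h2
      rw [← Finset.prod_pow]
      refine Finset.prod_congr rfl fun i _ => ?_
      rw [← rpow_natCast ((C0 + γ * ∫ ω, (ξ i ω)^2 ∂μ)^((n:ℝ)⁻¹)) n,
        ← rpow_mul (hAnn i), inv_mul_cancel₀ (by exact_mod_cast hn0' : (n:ℝ) ≠ 0), rpow_one]
    have hMeq : C0 + γ * c = M l := by
      simp only [hM_def]
      rw [hC0def, hγdef]
      have hE : exp (-(l*c)) = (exp (l*c))⁻¹ := by rw [← exp_neg]
      have hEb : exp (l*(1+c)) = exp l * exp (l*c) := by rw [← exp_add]; ring_nf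
      rw [hE, hEb]
      have h1 : exp (l*c) ≠ 0 := (exp_pos _).ne'
      have h2 : (1:ℝ)+c ≠ 0 := by positivity
      field_simp
      ring
    calc mgf (∑ i, ξ i) μ l = ∏ i, mgf (ξ i) μ l := hprod
      _ ≤ ∏ i, (C0 + γ * ∫ ω, (ξ i ω)^2 ∂μ) := h1
      _ ≤ (C0 + γ*c)^n := key
      _ = (M l)^n := by rw [hMeq]
  have hinf_le : ∀ l : ℝ, 0 ≤ l → sInf Y ≤ exp (-(l*s)) * (M l)^n :=
    fun l hl => (csInf_le hYbdd (hmemY l hl)).trans (hF l hl)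
  have hfirst : sInf Y ≤ hoeffdingFn n x σ := by
    by_cases hcase : s < n
    · -- main case: optimal l
      have hxσpos : (0:ℝ) < x + σ := by linarith
      have hnspos : (0:ℝ) < (n:ℝ) - s := by linarith
      have hxle : x ≤ (n:ℝ)/σ := by rw [le_div_iff₀ hσ, ← hs_def]; exact le_of_lt hcase
      set P : ℝ := Real.log (σ/(x+σ)) with hPdef
      set Q : ℝ := Real.log ((n:ℝ)/((n:ℝ)-s)) with hQdef
      set l₀ : ℝ := (n:ℝ)*(Q-P)/((n:ℝ)+σ^2) with hldef
      have hP : P ≤ 0 := log_nonpos (by positivity) (by rw [div_le_one hxσpos]; linarith)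
      have hQ0 : 0 ≤ Q := log_nonneg (by rw [le_div_iff₀ hnspos]; linarith)
      have hl₀ : 0 ≤ l₀ :=
        div_nonneg (mul_nonneg hn0.le (by linarith)) (by positivity)
      have heP : exp P = σ/(x+σ) := exp_log (by positivity)
      have heQ : exp Q = (n:ℝ)/((n:ℝ)-s) := exp_log (by positivity)
      have hM0 : M l₀ = exp (Q - l₀*c) := by
        simp only [hM_def]
        have e1 : exp l₀ = (((n:ℝ)/((n:ℝ)-s)) * ((x+σ)/σ)) * exp (-(l₀*c)) := by
          have harg : l₀ = (Q - P) + -(l₀*c) := by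
            rw [hldef, hc_def]; field_simp; ring
          nth_rewrite 1 [harg]
          rw [exp_add, exp_sub, heP, heQ]
          congr 1
          field_simp
        have e2 : exp (Q - l₀*c) = ((n:ℝ)/((n:ℝ)-s)) * exp (-(l₀*c)) := by
          rw [show Q - l₀*c = Q + -(l₀*c) by ring, exp_add, heQ]
        rw [e1, e2, hc_def, hs_def]
        have hne : (n:ℝ) - σ*x ≠ 0 := by rw [mul_comm, ← hs_def]; exact hnspos.ne'
        field_simp
        ring
      have hH : hoeffdingFn n x σ
          = exp ((P*(s+σ^2) + Q*((n:ℝ)-s)) * ((n:ℝ)/((n:ℝ)+σ^2))) := by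
        rw [hoeffdingFn, if_pos hxle, ← hs_def]
        rw [rpow_def_of_pos (show (0:ℝ) < σ/(x+σ) by positivity),
          rpow_def_of_pos (show (0:ℝ) < (n:ℝ)/((n:ℝ)-s) by positivity),
          ← exp_add, rpow_def_of_pos (exp_pos _), log_exp, ← hPdef, ← hQdef]
      refine (hinf_le l₀ hl₀).trans (le_of_eq ?_)
      rw [hM0, ← exp_nat_mul, ← exp_add, hH]
      congr 1
      rw [hldef, hc_def]
      field_simp
      ring
    · -- boundary cases: n ≤ s
      push_neg at hcase
      set g : ℝ → ℝ := fun l => (c * exp (l*(1-s/n)) + exp (-(l*(c+s/n)))) / (1+c) with hgdef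
      have hgF : ∀ l : ℝ, exp (-(l*s)) * (M l)^n = (g l)^n := by
        intro l
        simp only [hM_def, hgdef]
        rw [show exp (-(l*s)) = (exp (-(l*(s/n))))^n by
          rw [← exp_nat_mul]; congr 1; field_simp]
        rw [← mul_pow]
        congr 1
        rw [show exp (-(l*(s/n))) * ((c*exp l + exp (-(l*c)))/(1+c))
            = (exp (-(l*(s/n))) * (c*exp l + exp (-(l*c))))/(1+c) from (mul_div_assoc _ _ _).symm]
        congr 1
        have e1 : exp (-(l*(s/n))) * exp l = exp (l*(1-s/n)) := by
          rw [← exp_add]; congr 1; field_simp; ring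
        have e2 : exp (-(l*(s/n))) * exp (-(l*c)) = exp (-(l*(c+s/n))) := by
          rw [← exp_add]; congr 1; field_simp; ring
        rw [mul_add, mul_left_comm, e1, e2]
      have hbound : ∀ᶠ l in atTop, sInf Y ≤ (g l)^n := by
        filter_upwards [eventually_ge_atTop 0] with l hl
        exact (hinf_le l hl).trans_eq (hgF l)
      have htail : ∀ a : ℝ, 0 < a → Tendsto (fun l : ℝ => exp (-(l*a))) atTop (𝓝 0) := by
        intro a ha
        exact tendsto_exp_neg_atTop_nhds_zero.comp (Tendsto.atTop_mul_const ha tendsto_id)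
      rcases eq_or_lt_of_le hcase with heq | hlt
      · -- s = n
        have hxσn : x * σ = (n:ℝ) := by rw [← hs_def]; linarith
        have hxle : x ≤ (n:ℝ)/σ := by rw [le_div_iff₀ hσ, hxσn]
        have hH : hoeffdingFn n x σ = (c/(1+c))^n := by
          rw [hoeffdingFn, if_pos hxle, ← hs_def,
            show (n:ℝ) - s = 0 by linarith, div_zero, Real.rpow_zero, mul_one,
            show s + σ^2 = (n:ℝ) + σ^2 by linarith,
            ← Real.rpow_mul (by positivity : (0:ℝ) ≤ σ/(x+σ)),
            show ((n:ℝ)+σ^2)*((n:ℝ)/((n:ℝ)+σ^2)) = (n:ℝ) by field_simp,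
            Real.rpow_natCast]
          congr 1
          have hxval : x = (n:ℝ)/σ := by rw [eq_div_iff hσ.ne']; exact hxσn
          rw [hxval, hc_def]
          field_simp
        rw [hH]
        refine ge_of_tendsto ?_ hbound
        apply Tendsto.pow
        have h1 : g = fun l => (c + exp (-(l*(c+s/n))))/(1+c) := by
          funext l
          simp only [hgdef]
          rw [show 1 - s/(n:ℝ) = 0 by rw [← heq, div_self hn0.ne', sub_self]]
          norm_num
        rw [h1]
        have h2 : Tendsto (fun l : ℝ => (c + exp (-(l*(c+s/(n:ℝ)))))/(1+c)) atTop
            (𝓝 ((c + 0)/(1+c))) :=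
          (Tendsto.add tendsto_const_nhds (htail (c+s/(n:ℝ)) (by positivity))).div_const (1+c)
        simpa using h2
      · -- n < s
        have hH : hoeffdingFn n x σ = 0 := by
          rw [hoeffdingFn, if_neg]
          rw [not_le, div_lt_iff₀ hσ]
          linarith [hs_def]
        rw [hH]
        refine ge_of_tendsto ?_ hbound
        have h1 : Tendsto g atTop (𝓝 0) := by
          have e1 : (fun l : ℝ => exp (l*(1-s/n))) = fun l => exp (-(l*(s/n-1))) := by
            funext l; congr 1; ring
          have hpos : (0:ℝ) < s/n - 1 := by
            rw [lt_sub_iff_add_lt, lt_div_iff₀ hn0]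
            linarith
          have t1 : Tendsto (fun l : ℝ => exp (l*(1-s/n))) atTop (𝓝 0) := by
            rw [e1]; exact htail _ hpos
          have h2 : Tendsto (fun l : ℝ => (c * exp (l*(1-s/(n:ℝ)))
              + exp (-(l*(c+s/(n:ℝ)))))/(1+c)) atTop (𝓝 ((c*0+0)/(1+c))) :=
            ((Tendsto.mul tendsto_const_nhds t1).add
              (htail (c+s/(n:ℝ)) (by positivity))).div_const (1+c)
          rw [hgdef]
          simpa using h2
        have := h1.pow n
        simpa [zero_pow hn0'] using this
  refine ⟨hfirst, le_trans ?_ hfirst⟩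
  refine le_csInf hYne ?_
  rintro y ⟨l, hl, rfl⟩
  have hmg := measure_ge_le_exp_mul_mgf (μ := μ) (X := ∑ i, ξ i) s hl
    (by simpa [Finset.sum_apply] using hintS l hl)
  rw [hval l hl]
  rw [show {ω | s ≤ ∑ i, ξ i ω} = {ω | s ≤ (∑ i, ξ i) ω} from by
    ext ω; simp [Finset.sum_apply]]
  refine hmg.trans (le_of_eq ?_)
  rw [neg_mul]
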